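/- Let Π be a set of permutation patterns, the largest of which has size k. For a permutation s ∈ S_{n−1} and i ∈ {1,…,n}, j ∈ {1,…,n}, let s↑^i_j denote the standardization of the word obtained by inserting the value j−0.5 into position i of s; for a set A of permutations, A↑^i_j = {s↑^i_j : s ∈ A}. Then for every n > k, S_n(Π) = ⋂_{j=1}^{k+1} ⋃_{i=1}^{n} S_{n−1}(Π)↑^i_j. -/

import Mathlib

/-- `w` is a permutation of `{1,…,n}`, viewed as a word containing each of `1,…,n` exactly once. -/
def IsPermWord (n : ℕ) (w : List ℕ) : Prop := w.Perm (List.range' 1 n)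

/-- The standardization of a word `w` of distinct letters: each letter is replaced by its rank. -/
def stdize (w : List ℕ) : List ℕ := w.map fun x => (w.filter fun y => decide (y ≤ x)).length

/-- `τ` avoids the set of patterns `P`: no nonempty subsequence of `τ` standardizes to a pattern. -/
def AvoidsSet (P : Set (List ℕ)) (τ : List ℕ) : Prop :=
  ∀ u : List ℕ, u.Sublist τ → u ≠ [] → stdize u ∉ P
/-- `s↑^i_j`: insert the value `j - 0.5` into position `i` (1-indexed) of `s` and standardize;
equivalently, increment every letter of `s` that is `≥ j` and insert the letter `j` at
position `i`. -/
def insVal (i j : ℕ) (s : List ℕ) : List ℕ :=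
  (s.map fun x => if j ≤ x then x + 1 else x).take (i - 1) ++
    j :: (s.map fun x => if j ≤ x then x + 1 else x).drop (i - 1)

lemma stdize_map {f : ℕ → ℕ} (hf : ∀ a b, f a ≤ f b ↔ a ≤ b) (u : List ℕ) :
    stdize (u.map f) = stdize u := by
  unfold stdize
  rw [List.map_map]
  apply List.map_congr_left
  intro x hx
  simp only [Function.comp_apply]
  rw [List.filter_map, List.length_map]
  congr 1
  apply List.filter_congr
  intro y hy
  simp only [Function.comp_apply, decide_eq_decide]
  exact hf y x

lemma inc_le_iff (j : ℕ) : ∀ a b : ℕ,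
    (if j ≤ a then a + 1 else a) ≤ (if j ≤ b then b + 1 else b) ↔ a ≤ b := by
  intro a b; split_ifs <;> omega

lemma sublist_append_of_not_mem {u A B : List ℕ} {j : ℕ}
    (h : u.Sublist (A ++ j :: B)) (hj : j ∉ u) : u.Sublist (A ++ B) := by
  rw [List.sublist_append_iff] at h
  obtain ⟨u1, u2, rfl, h1, h2⟩ := h
  rw [List.sublist_cons_iff] at h2
  rcases h2 with h2 | ⟨r, rfl, hr⟩
  · exact h1.append h2
  · exact absurd (List.mem_append_right _ (List.mem_cons_self)) hj

lemma map_inc_dec {j : ℕ} {l : List ℕ} (hl : j ∉ l) :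
    (l.map fun x => if j < x then x - 1 else x).map (fun x => if j ≤ x then x + 1 else x) = l := by
  rw [List.map_map]
  have h : ∀ x ∈ l, ((fun x => if j ≤ x then x + 1 else x) ∘ fun x => if j < x then x - 1 else x) x
      = id x := by
    intro x hx
    have hxj : x ≠ j := fun h => hl (h ▸ hx)
    simp only [Function.comp_apply, id_eq]
    split_ifs <;> omega
  rw [List.map_congr_left h, List.map_id]

lemma range'_split' (j m : ℕ) (hj1 : 1 ≤ j) (hjm : j ≤ m + 1) :
    List.range' 1 m = List.range' 1 (j - 1) ++ List.range' j (m - (j - 1)) := by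
  conv_lhs => rw [show m = (j - 1) + (m - (j - 1)) by omega]
  rw [← List.range'_append]
  congr 2 <;> omega

lemma range'_split (j n : ℕ) (hj1 : 1 ≤ j) (hjn : j ≤ n) :
    List.range' 1 n = List.range' 1 (j - 1) ++ j :: List.range' (j + 1) (n - j) := by
  rw [range'_split' j n hj1 (by omega)]
  congr 1
  rw [show n - (j - 1) = (n - j) + 1 by omega, List.range'_succ]

lemma not_mem_range'_head (j : ℕ) : j ∉ List.range' 1 (j - 1) := by
  intro h
  rw [List.mem_range'_1] at h
  omega

lemma map_inc_range' (j m : ℕ) (hj1 : 1 ≤ j) (hjm : j ≤ m + 1) :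
    (List.range' 1 m).map (fun x => if j ≤ x then x + 1 else x)
      = List.range' 1 (j - 1) ++ List.range' (j + 1) (m - (j - 1)) := by
  rw [range'_split' j m hj1 hjm, List.map_append]
  congr 1
  · have h : ∀ x ∈ List.range' 1 (j - 1), (if j ≤ x then x + 1 else x) = id x := by
      intro x hx
      rw [List.mem_range'_1] at hx
      simp only [id_eq]
      rw [if_neg (by omega)]
    rw [List.map_congr_left h, List.map_id]
  · have h : ∀ x ∈ List.range' j (m - (j - 1)), (if j ≤ x then x + 1 else x) = 1 + x := by
      intro x hx
      rw [List.mem_range'_1] at hx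
      rw [if_pos (by omega)]
      omega
    rw [List.map_congr_left h, List.map_add_range']
    congr 1
    omega

lemma map_dec_erase_range' (j n : ℕ) (hj1 : 1 ≤ j) (hjn : j ≤ n) :
    ((List.range' 1 n).erase j).map (fun x => if j < x then x - 1 else x)
      = List.range' 1 (n - 1) := by
  rw [range'_split j n hj1 hjn,
    List.erase_append_right _ (not_mem_range'_head j), List.erase_cons_head, List.map_append]
  rw [range'_split' j (n - 1) hj1 (by omega)]
  congr 1
  · have h : ∀ x ∈ List.range' 1 (j - 1), (if j < x then x - 1 else x) = id x := by
      intro x hx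
      rw [List.mem_range'_1] at hx
      simp only [id_eq]
      rw [if_neg (by omega)]
    rw [List.map_congr_left h, List.map_id]
  · have e : List.range' (j + 1) (n - j) = (List.range' j (n - j)).map (fun x => 1 + x) := by
      rw [List.map_add_range', Nat.add_comm 1 j]
    rw [e, List.map_map]
    have h : ∀ x ∈ List.range' j (n - j),
        ((fun x => if j < x then x - 1 else x) ∘ fun x => 1 + x) x = id x := by
      intro x hx
      rw [List.mem_range'_1] at hx
      simp only [Function.comp_apply, id_eq]
      rw [if_pos (by omega)]
      omega
    rw [List.map_congr_left h, List.map_id]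
    congr 1
    omega

lemma insVal_perm {n i j : ℕ} {σ : List ℕ} (hj1 : 1 ≤ j) (hjn : j ≤ n)
    (hσ : σ.Perm (List.range' 1 (n - 1))) : (insVal i j σ).Perm (List.range' 1 n) := by
  unfold insVal
  set T := σ.map fun x => if j ≤ x then x + 1 else x with hT
  have hTp : T.Perm (List.range' 1 (j - 1) ++ List.range' (j + 1) ((n - 1) - (j - 1))) := by
    rw [← map_inc_range' j (n - 1) hj1 (by omega)]
    exact hσ.map _
  refine List.Perm.trans List.perm_middle ?_
  rw [List.take_append_drop]
  refine (hTp.cons j).trans ?_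
  refine List.Perm.trans List.perm_middle.symm ?_
  rw [range'_split j n hj1 hjn, show (n - 1) - (j - 1) = n - j by omega]

lemma stdize_length (u : List ℕ) : (stdize u).length = u.length := by
  simp [stdize]

theorem statement11 (P : Set (List ℕ)) (k : ℕ)
    (hP : ∀ π ∈ P, IsPermWord π.length π ∧ 1 ≤ π.length ∧ π.length ≤ k)
    (hk : ∃ π ∈ P, π.length = k) (n : ℕ) (hn : k < n) :
    {τ : List ℕ | IsPermWord n τ ∧ AvoidsSet P τ} =
      ⋂ j ∈ Set.Icc 1 (k + 1), ⋃ i ∈ Set.Icc 1 n,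
        insVal i j '' {σ : List ℕ | IsPermWord (n - 1) σ ∧ AvoidsSet P σ} := by
  ext τ
  simp only [Set.mem_setOf_eq, Set.mem_iInter, Set.mem_iUnion, Set.mem_image, Set.mem_Icc]
  constructor
  · rintro ⟨hperm, havoid⟩ j ⟨hj1, hjk⟩
    have hjn : j ≤ n := by omega
    have hmem : j ∈ τ := hperm.mem_iff.2 (by rw [List.mem_range'_1]; omega)
    have hnd : τ.Nodup := (hperm.symm).nodup List.nodup_range'
    have hidx : τ.idxOf j < τ.length := List.idxOf_lt_length_iff.2 hmem
    have hlen : τ.length = n := by rw [hperm.length_eq, List.length_range']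
    have hjer : j ∉ τ.erase j := hnd.not_mem_erase
    have hincdec : ((τ.erase j).map fun x => if j < x then x - 1 else x).map
        (fun x => if j ≤ x then x + 1 else x) = τ.erase j := map_inc_dec hjer
    refine ⟨τ.idxOf j + 1, ⟨by omega, by omega⟩,
      (τ.erase j).map fun x => if j < x then x - 1 else x, ⟨?_, ?_⟩, ?_⟩
    · have := (hperm.erase j).map fun x => if j < x then x - 1 else x
      rw [map_dec_erase_range' j n hj1 hjn] at this
      exact this
    · intro u hu hune hmem'
      have h2 : (u.map fun x => if j ≤ x then x + 1 else x).Sublist τ := by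
        refine List.Sublist.trans ?_ (List.erase_sublist (a := j) (l := τ))
        rw [← hincdec]
        exact hu.map _
      exact havoid _ h2 (by simpa using hune)
        (by rw [stdize_map (inc_le_iff j)]; exact hmem')
    · unfold insVal
      simp only [Nat.add_sub_cancel]
      rw [hincdec]
      have hdecomp : τ = τ.take (τ.idxOf j) ++ j :: τ.drop (τ.idxOf j + 1) := by
        conv_lhs => rw [← List.take_append_drop (τ.idxOf j) τ]
        rw [List.drop_eq_getElem_cons hidx, List.getElem_idxOf hidx]
      have hjtake : j ∉ τ.take (τ.idxOf j) := by
        have hnd2 := hnd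
        rw [hdecomp, List.nodup_middle, List.nodup_cons] at hnd2
        intro hc
        exact hnd2.1 (List.mem_append_left _ hc)
      have her : τ.erase j = τ.take (τ.idxOf j) ++ τ.drop (τ.idxOf j + 1) := by
        conv_lhs => rw [hdecomp]
        rw [List.erase_append_right _ hjtake, List.erase_cons_head]
      have hlt : (τ.take (τ.idxOf j)).length = τ.idxOf j := by
        rw [List.length_take]; omega
      rw [her, List.take_left' hlt, List.drop_left' hlt]
      exact hdecomp.symm
  · intro h
    obtain ⟨i, ⟨hi1, hin⟩, σ, ⟨hσp, hσa⟩, heq⟩ := h 1 ⟨le_refl 1, by omega⟩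
    constructor
    · rw [← heq]; exact insVal_perm (le_refl 1) (by omega) hσp
    · intro u hu hune hmem
      have hlenu : u.length ≤ k := by
        have := (hP _ hmem).2.2
        rwa [stdize_length] at this
      obtain ⟨j, hj1, hjk, hju⟩ : ∃ j, 1 ≤ j ∧ j ≤ k + 1 ∧ j ∉ u := by
        by_contra hc
        push_neg at hc
        have hsub : Finset.Icc 1 (k + 1) ⊆ u.toFinset := by
          intro x hx
          rw [Finset.mem_Icc] at hx
          exact List.mem_toFinset.2 (hc x hx.1 hx.2)
        have h1 := Finset.card_le_card hsub
        have h2 := u.toFinset_card_le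
        rw [Nat.card_Icc] at h1
        omega
      obtain ⟨i', ⟨hi'1, hi'n⟩, σ', ⟨hσ'p, hσ'a⟩, heq'⟩ := h j ⟨hj1, hjk⟩
      rw [← heq'] at hu
      unfold insVal at hu
      have hu2 := sublist_append_of_not_mem hu hju
      rw [List.take_append_drop, List.sublist_map_iff] at hu2
      obtain ⟨u', hu', rfl⟩ := hu2
      rw [stdize_map (inc_le_iff j)] at hmem
      exact hσ'a u' hu' (by simpa using hune) hmem
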